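/- Let p₁, p₂ be probability measures on ℝⁿ and q a probability measure on ℝᵐ with finite second moments. Then W₂(p₁ ⊗ q, p₂ ⊗ q) = W₂(p₁, p₂), where ⊗ denotes the product measure on ℝⁿ × ℝᵐ with the Euclidean norm. -/

import Mathlib

open MeasureTheory

/-- The 2-Wasserstein distance, defined via couplings. -/
noncomputable def W2 {X : Type*} [MetricSpace X] [MeasurableSpace X]
    (ν μ : Measure X) : ℝ :=
  sInf {c : ℝ | ∃ γ : Measure (X × X), γ.fst = ν ∧ γ.snd = μ ∧
    c = (∫ z, dist z.1 z.2 ^ (2 : ℝ) ∂γ) ^ ((1 : ℝ) / 2)}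

/-- The 2-Wasserstein distance on the product space `ℝⁿ × ℝᵐ` with the
Euclidean cost `‖(x,y)‖² = ‖x‖² + ‖y‖²`, defined via couplings. -/
noncomputable def W2prod {n m : ℕ}
    (μ ν : Measure (EuclideanSpace ℝ (Fin n) × EuclideanSpace ℝ (Fin m))) : ℝ :=
  sInf {c : ℝ | ∃ γ, γ.fst = μ ∧ γ.snd = ν ∧
    c = (∫ z : (EuclideanSpace ℝ (Fin n) × EuclideanSpace ℝ (Fin m)) ×
            (EuclideanSpace ℝ (Fin n) × EuclideanSpace ℝ (Fin m)),
          (‖z.1.1 - z.2.1‖ ^ 2 + ‖z.1.2 - z.2.2‖ ^ 2) ∂γ) ^ ((1 : ℝ) / 2)}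

/-- Abbreviation for Euclidean space. -/
abbrev Eu (k : ℕ) := EuclideanSpace ℝ (Fin k)

/-- A measure whose first marginal is a probability measure is itself a
probability measure. -/
theorem isProbabilityMeasure_of_fst {X Y : Type*} [MeasurableSpace X] [MeasurableSpace Y]
    {γ : Measure (X × Y)} {μ : Measure X} [IsProbabilityMeasure μ]
    (h : γ.fst = μ) : IsProbabilityMeasure γ := by
  constructor
  have h1 : γ.fst Set.univ = 1 := by rw [h]; simp
  rwa [Measure.fst_apply MeasurableSet.univ, Set.preimage_univ] at h1

/-- If a measurable projection pushes a measure forward to a measure with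
finite second moment, then the squared norm of the projection is integrable. -/
theorem integrable_sq_norm_comp {W E : Type*} [MeasurableSpace W] [NormedAddCommGroup E]
    [MeasurableSpace E] [BorelSpace E] {γ : Measure W} {μ : Measure E}
    {π : W → E} (hπ : Measurable π) (h : γ.map π = μ) (hμ : MemLp id 2 μ) :
    Integrable (fun w => ‖π w‖ ^ 2) γ := by
  have h1 : Integrable (fun x : E => ‖x‖ ^ 2) μ := by
    have := (memLp_two_iff_integrable_sq_norm hμ.aestronglyMeasurable).mp hμ
    simpa using this
  rw [← h] at h1
  exact (integrable_map_measure
    ((continuous_norm.pow 2).aestronglyMeasurable) hπ.aemeasurable).mp h1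

theorem sq_norm_sub_le {E : Type*} [NormedAddCommGroup E] (a b : E) :
    ‖a - b‖ ^ 2 ≤ 2 * ‖a‖ ^ 2 + 2 * ‖b‖ ^ 2 := by
  have h := norm_sub_le a b
  nlinarith [norm_nonneg (a - b), norm_nonneg a, norm_nonneg b, sq_nonneg (‖a‖ - ‖b‖)]

/-- An identical independent component does not affect the 2-Wasserstein
distance: `W₂(p₁ ⊗ q, p₂ ⊗ q) = W₂(p₁, p₂)`. -/
theorem W2_prod_eq (n m : ℕ)
    (p₁ p₂ : Measure (EuclideanSpace ℝ (Fin n)))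
    (q : Measure (EuclideanSpace ℝ (Fin m)))
    [IsProbabilityMeasure p₁] [IsProbabilityMeasure p₂] [IsProbabilityMeasure q]
    (hp₁ : MemLp id 2 p₁) (hp₂ : MemLp id 2 p₂) (hq : MemLp id 2 q) :
    W2prod (p₁.prod q) (p₂.prod q) = W2 p₁ p₂ := by
  -- the cost function on the product space
  set f : (Eu n × Eu m) × (Eu n × Eu m) → ℝ :=
    fun z => ‖z.1.1 - z.2.1‖ ^ 2 + ‖z.1.2 - z.2.2‖ ^ 2 with hf
  haveI : BorelSpace ((Eu n × Eu m) × (Eu n × Eu m)) := Prod.borelSpace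
  have hfc : Continuous f := by fun_prop
  apply le_antisymm
  · -- W2prod ≤ W2 : transport couplings via (x, y, a) ↦ ((x, a), (y, a))
    apply csInf_le_csInf
    · refine ⟨0, fun c hc => ?_⟩
      obtain ⟨γ, _, _, rfl⟩ := hc
      exact Real.rpow_nonneg (integral_nonneg fun z => by positivity) _
    · exact ⟨_, p₁.prod p₂, Measure.fst_prod, Measure.snd_prod, rfl⟩
    · rintro c ⟨γ, h1, h2, rfl⟩
      have : IsProbabilityMeasure γ := isProbabilityMeasure_of_fst h1
      set T : (Eu n × Eu n) × Eu m → (Eu n × Eu m) × (Eu n × Eu m) :=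
        fun w => ((w.1.1, w.2), (w.1.2, w.2)) with hT
      have hTm : Measurable T := by fun_prop
      refine ⟨(γ.prod q).map T, ?_, ?_, ?_⟩
      · rw [Measure.fst, Measure.map_map measurable_fst hTm]
        have h3 : (Prod.fst ∘ T) = Prod.map (Prod.fst : Eu n × Eu n → Eu n) (id : Eu m → Eu m) :=
          rfl
        rw [h3, ← Measure.map_prod_map _ _ measurable_fst measurable_id, Measure.map_id,
          show γ.map Prod.fst = γ.fst from rfl, h1]
      · rw [Measure.snd, Measure.map_map measurable_snd hTm]
        have h3 : (Prod.snd ∘ T) = Prod.map (Prod.snd : Eu n × Eu n → Eu n) (id : Eu m → Eu m) :=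
          rfl
        rw [h3, ← Measure.map_prod_map _ _ measurable_snd measurable_id, Measure.map_id,
          show γ.map Prod.snd = γ.snd from rfl, h2]
      · congr 1
        rw [integral_map hTm.aemeasurable hfc.aestronglyMeasurable]
        have step : ∀ w : (Eu n × Eu n) × Eu m, f (T w) = ‖w.1.1 - w.1.2‖ ^ 2 := by
          intro w; simp [hf, hT]
        simp_rw [step]
        have hg : Continuous fun z : Eu n × Eu n => ‖z.1 - z.2‖ ^ 2 := by fun_prop
        symm
        calc ∫ w : (Eu n × Eu n) × Eu m, ‖w.1.1 - w.1.2‖ ^ 2 ∂(γ.prod q)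
            = ∫ z : Eu n × Eu n, ‖z.1 - z.2‖ ^ 2 ∂((γ.prod q).map Prod.fst) :=
              (integral_map measurable_fst.aemeasurable hg.aestronglyMeasurable).symm
          _ = ∫ z : Eu n × Eu n, ‖z.1 - z.2‖ ^ 2 ∂γ := by
              rw [show (γ.prod q).map Prod.fst = (γ.prod q).fst from rfl, Measure.fst_prod]
          _ = ∫ z : Eu n × Eu n, dist z.1 z.2 ^ (2 : ℝ) ∂γ := by
              refine integral_congr_ae (Filter.Eventually.of_forall fun z => ?_)
              show ‖z.1 - z.2‖ ^ 2 = dist z.1 z.2 ^ (2 : ℝ)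
              rw [dist_eq_norm, show ((2 : ℝ) = ((2 : ℕ) : ℝ)) by norm_num,
                Real.rpow_natCast]
  · -- W2 ≤ W2prod : project couplings onto the first components
    apply le_csInf
    · exact ⟨_, (p₁.prod q).prod (p₂.prod q), Measure.fst_prod, Measure.snd_prod, rfl⟩
    · rintro c ⟨Γ, h1, h2, rfl⟩
      have : IsProbabilityMeasure Γ := isProbabilityMeasure_of_fst h1
      -- the projected coupling
      set P : (Eu n × Eu m) × (Eu n × Eu m) → Eu n × Eu n := fun z => (z.1.1, z.2.1) with hP
      have hPm : Measurable P := by fun_prop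
      have hmapP1 : Γ.map (fun z : (Eu n × Eu m) × (Eu n × Eu m) => z.1.1) = p₁ := by
        rw [show (fun z : (Eu n × Eu m) × (Eu n × Eu m) => z.1.1) =
            ((Prod.fst : Eu n × Eu m → Eu n) ∘ Prod.fst) from rfl,
          ← Measure.map_map measurable_fst measurable_fst,
          show Γ.map Prod.fst = Γ.fst from rfl, h1,
          show (p₁.prod q).map Prod.fst = (p₁.prod q).fst from rfl, Measure.fst_prod]
      have hmapP2 : Γ.map (fun z : (Eu n × Eu m) × (Eu n × Eu m) => z.2.1) = p₂ := by
        rw [show (fun z : (Eu n × Eu m) × (Eu n × Eu m) => z.2.1) =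
            ((Prod.fst : Eu n × Eu m → Eu n) ∘ Prod.snd) from rfl,
          ← Measure.map_map measurable_fst measurable_snd,
          show Γ.map Prod.snd = Γ.snd from rfl, h2,
          show (p₂.prod q).map Prod.fst = (p₂.prod q).fst from rfl, Measure.fst_prod]
      have hmapQ1 : Γ.map (fun z : (Eu n × Eu m) × (Eu n × Eu m) => z.1.2) = q := by
        rw [show (fun z : (Eu n × Eu m) × (Eu n × Eu m) => z.1.2) =
            ((Prod.snd : Eu n × Eu m → Eu m) ∘ Prod.fst) from rfl,
          ← Measure.map_map measurable_snd measurable_fst,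
          show Γ.map Prod.fst = Γ.fst from rfl, h1,
          show (p₁.prod q).map Prod.snd = (p₁.prod q).snd from rfl, Measure.snd_prod]
      have hmapQ2 : Γ.map (fun z : (Eu n × Eu m) × (Eu n × Eu m) => z.2.2) = q := by
        rw [show (fun z : (Eu n × Eu m) × (Eu n × Eu m) => z.2.2) =
            ((Prod.snd : Eu n × Eu m → Eu m) ∘ Prod.snd) from rfl,
          ← Measure.map_map measurable_snd measurable_snd,
          show Γ.map Prod.snd = Γ.snd from rfl, h2,
          show (p₂.prod q).map Prod.snd = (p₂.prod q).snd from rfl, Measure.snd_prod]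
      -- integrability of the pieces
      have I11 := integrable_sq_norm_comp (by fun_prop) hmapP1 hp₁
      have I21 := integrable_sq_norm_comp (by fun_prop) hmapP2 hp₂
      have I12 := integrable_sq_norm_comp (by fun_prop) hmapQ1 hq
      have I22 := integrable_sq_norm_comp (by fun_prop) hmapQ2 hq
      -- integrability of the parts of the cost
      have hgc : Continuous fun z : (Eu n × Eu m) × (Eu n × Eu m) => ‖z.1.1 - z.2.1‖ ^ 2 := by
        fun_prop
      have hg2c : Continuous fun z : (Eu n × Eu m) × (Eu n × Eu m) => ‖z.1.2 - z.2.2‖ ^ 2 := by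
        fun_prop
      have Ig : Integrable (fun z : (Eu n × Eu m) × (Eu n × Eu m) => ‖z.1.1 - z.2.1‖ ^ 2) Γ := by
        refine Integrable.mono' ((I11.const_mul 2).add (I21.const_mul 2))
          hgc.aestronglyMeasurable (Filter.Eventually.of_forall fun z => ?_)
        rw [Real.norm_of_nonneg (by positivity)]
        exact sq_norm_sub_le _ _
      have Ig2 : Integrable (fun z : (Eu n × Eu m) × (Eu n × Eu m) => ‖z.1.2 - z.2.2‖ ^ 2) Γ := by
        refine Integrable.mono' ((I12.const_mul 2).add (I22.const_mul 2))
          hg2c.aestronglyMeasurable (Filter.Eventually.of_forall fun z => ?_)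
        rw [Real.norm_of_nonneg (by positivity)]
        exact sq_norm_sub_le _ _
      -- the projected coupling is a coupling of p₁ and p₂
      have hc1 : (Γ.map P).fst = p₁ := by
        rw [Measure.fst, Measure.map_map measurable_fst hPm]; exact hmapP1
      have hc2 : (Γ.map P).snd = p₂ := by
        rw [Measure.snd, Measure.map_map measurable_snd hPm]; exact hmapP2
      have hcost : ∫ z : Eu n × Eu n, dist z.1 z.2 ^ (2 : ℝ) ∂(Γ.map P) =
          ∫ z : (Eu n × Eu m) × (Eu n × Eu m), ‖z.1.1 - z.2.1‖ ^ 2 ∂Γ := by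
        have hdc : Continuous fun z : Eu n × Eu n => dist z.1 z.2 ^ (2 : ℝ) := by
          apply Continuous.rpow_const (by fun_prop)
          intro z; right; norm_num
        rw [integral_map hPm.aemeasurable hdc.aestronglyMeasurable]
        refine integral_congr_ae (Filter.Eventually.of_forall fun z => ?_)
        show dist (P z).1 (P z).2 ^ (2 : ℝ) = ‖z.1.1 - z.2.1‖ ^ 2
        rw [dist_eq_norm, show ((2 : ℝ) = ((2 : ℕ) : ℝ)) by norm_num, Real.rpow_natCast]
      have hmem : (∫ z : Eu n × Eu n, dist z.1 z.2 ^ (2 : ℝ) ∂(Γ.map P)) ^ ((1 : ℝ) / 2) ∈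
          {c : ℝ | ∃ γ : Measure (Eu n × Eu n), γ.fst = p₁ ∧ γ.snd = p₂ ∧
            c = (∫ z, dist z.1 z.2 ^ (2 : ℝ) ∂γ) ^ ((1 : ℝ) / 2)} :=
        ⟨Γ.map P, hc1, hc2, rfl⟩
      refine le_trans (csInf_le ?_ hmem) ?_
      · refine ⟨0, fun c hc => ?_⟩
        obtain ⟨γ, _, _, rfl⟩ := hc
        exact Real.rpow_nonneg (integral_nonneg fun z => by positivity) _
      · rw [hcost]
        apply Real.rpow_le_rpow (integral_nonneg fun z => by positivity) ?_ (by norm_num)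
        refine integral_mono Ig (Ig.add Ig2) fun z => ?_
        exact le_add_of_nonneg_right (by positivity)
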